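/- Let G be a topological group acting continuously and freely on a path-connected separable metric space X, let r ≥ 2, and let q_r : X^r → X^r/G be the quotient map for the diagonal G-action. Assume that q_r has the G-equivariant homotopy lifting property: for every separable metric space Y with a continuous G-action, every G-equivariant continuous map f : Y → X^r and every homotopy F : Y × [0,1] → X^r/G with F(·, 0) = q_r ∘ f, there exists a homotopy H : Y × [0,1] → X^r such that H(·, 0) = f, each map H(·, t) is G-equivariant, and q_r ∘ H = F. Then TC_{r,G}(X) ≤ cat(X^r/G). -/

import Mathlib

namespace EqTCAux

variable (T : ℕ → ℝ) (r : ℕ)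

/-- midpoint of `[T j, T (j+1)]`. -/
noncomputable def mid (j : ℕ) : ℝ := (T j + T (j + 1)) / 2

/-- tent map: 0 at each `T j`, 1 at each midpoint `mid j` for `j < r - 1`. -/
noncomputable def tent (κ : ℝ) : ℝ :=
  ∑ j ∈ Finset.range (r - 1), (2 / (T (j + 1) - T j)) * max 0 (min (κ - T j) (T (j + 1) - κ))

/-- counting function: number of midpoints `≤ κ`. -/
noncomputable def nn (κ : ℝ) : ℕ :=
  ((Finset.range (r - 1)).filter (fun j => mid T j ≤ κ)).card

variable {T r}

theorem tent_continuous : Continuous (tent T r) := by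
  apply continuous_finset_sum
  intro j _
  exact continuous_const.mul ((continuous_const.max
    ((continuous_id.sub continuous_const).min (continuous_const.sub continuous_id))))

variable (hT : StrictMono T)
include hT

theorem lt_mid {j : ℕ} : T j < mid T j := by
  have := hT (Nat.lt_succ_self j); unfold mid; linarith

theorem mid_lt {j : ℕ} : mid T j < T (j + 1) := by
  have := hT (Nat.lt_succ_self j); unfold mid; linarith

theorem mid_strictMono : StrictMono (mid T) := by
  intro a b hab
  have := hT hab
  have := hT (Nat.succ_lt_succ hab)
  unfold mid; linarith

theorem tent_nonneg (κ : ℝ) : 0 ≤ tent T r κ := by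
  apply Finset.sum_nonneg
  intro j _
  have h := hT (Nat.lt_succ_self j)
  apply mul_nonneg (div_nonneg (by norm_num) (by linarith)) (le_max_left _ _)

theorem tent_T {j : ℕ} (κ : ℝ) (hκ : κ = T j) : tent T r κ = 0 := by
  subst hκ
  apply Finset.sum_eq_zero
  intro i _
  rcases lt_or_ge i j with h | h
  · have h2 : T (i + 1) ≤ T j := hT.monotone h
    have : min (T j - T i) (T (i + 1) - T j) ≤ 0 := le_trans (min_le_right _ _) (by linarith)
    rw [max_eq_left this, mul_zero]
  · have h2 : T j ≤ T i := hT.monotone h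
    have : min (T j - T i) (T (i + 1) - T j) ≤ 0 := le_trans (min_le_left _ _) (by linarith)
    rw [max_eq_left this, mul_zero]

theorem tent_mid {j : ℕ} (hj : j < r - 1) : tent T r (mid T j) = 1 := by
  rw [tent, Finset.sum_eq_single j]
  · have h := hT (Nat.lt_succ_self j)
    have h1 : mid T j - T j = (T (j + 1) - T j) / 2 := by unfold mid; ring
    have h2 : T (j + 1) - mid T j = (T (j + 1) - T j) / 2 := by unfold mid; ring
    rw [h1, h2, min_self, max_eq_right (by linarith)]
    have hne : T (j + 1) - T j ≠ 0 := by linarith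
    field_simp
  · intro i _ hij
    rcases lt_or_ge i j with h | h
    · have h2 : T (i + 1) ≤ T j := hT.monotone h
      have h3 : T j < mid T j := lt_mid hT
      have : min (mid T j - T i) (T (i + 1) - mid T j) ≤ 0 :=
        le_trans (min_le_right _ _) (by linarith)
      rw [max_eq_left this, mul_zero]
    · have h' : j < i := lt_of_le_of_ne h (fun he => hij he.symm)
      have h2 : T (j + 1) ≤ T i := hT.monotone h'
      have h3 : mid T j < T (j + 1) := mid_lt hT
      have : min (mid T j - T i) (T (i + 1) - mid T j) ≤ 0 :=
        le_trans (min_le_left _ _) (by linarith)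
      rw [max_eq_left this, mul_zero]
  · intro h; exact absurd (Finset.mem_range.mpr hj) h

omit hT in
theorem nn_le (κ : ℝ) : nn T r κ ≤ r - 1 := by
  have := Finset.card_filter_le (Finset.range (r - 1)) (fun j => mid T j ≤ κ)
  simpa [nn] using this

theorem nn_T {j : ℕ} (hj : j ≤ r - 1) : nn T r (T j) = j := by
  have : (Finset.range (r - 1)).filter (fun i => mid T i ≤ T j) = Finset.range j := by
    ext i
    simp only [Finset.mem_filter, Finset.mem_range]
    constructor
    · rintro ⟨hi, hmid⟩
      by_contra h
      push_neg at h
      have h1 : T j ≤ T i := hT.monotone h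
      have h2 : T i < mid T i := lt_mid hT
      linarith
    · intro hi
      refine ⟨lt_of_lt_of_le hi hj, ?_⟩
      have h1 : mid T i < T (i + 1) := mid_lt hT
      have h2 : T (i + 1) ≤ T j := hT.monotone hi
      linarith
  rw [nn, this, Finset.card_range]

theorem nn_mid {j : ℕ} (hj : j < r - 1) : nn T r (mid T j) = j + 1 := by
  have : (Finset.range (r - 1)).filter (fun i => mid T i ≤ mid T j) = Finset.range (j + 1) := by
    ext i
    simp only [Finset.mem_filter, Finset.mem_range]
    constructor
    · rintro ⟨hi, hmid⟩
      by_contra h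
      push_neg at h
      exact absurd hmid (not_le.mpr ((mid_strictMono hT) h))
    · intro hi
      exact ⟨by omega, (mid_strictMono hT).monotone (by omega)⟩
  rw [nn, this, Finset.card_range]

omit hT in
/-- If all midpoints below `j` are `≤ κ` and all strictly between `j` and `r-1` are `> κ`,
then `nn κ` is `j` or `j + 1`. -/
theorem nn_pair {j : ℕ} (hj : j < r - 1) {κ : ℝ}
    (h1 : ∀ i, i < j → mid T i ≤ κ)
    (h2 : ∀ i, j < i → i < r - 1 → ¬mid T i ≤ κ) :
    nn T r κ = j ∨ nn T r κ = j + 1 := by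
  have hsub1 : Finset.range j ⊆ (Finset.range (r - 1)).filter (fun i => mid T i ≤ κ) := by
    intro i hi
    rw [Finset.mem_range] at hi
    exact Finset.mem_filter.mpr ⟨Finset.mem_range.mpr (by omega), h1 i hi⟩
  have hsub2 : (Finset.range (r - 1)).filter (fun i => mid T i ≤ κ) ⊆ Finset.range (j + 1) := by
    intro i hi
    rw [Finset.mem_filter, Finset.mem_range] at hi
    rw [Finset.mem_range]
    by_contra h
    exact h2 i (by omega) hi.1 hi.2
  have c1 := Finset.card_le_card hsub1
  have c2 := Finset.card_le_card hsub2
  rw [Finset.card_range] at c1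
  rw [Finset.card_range] at c2
  unfold nn
  omega

end EqTCAux



open scoped unitInterval


universe uw uv

theorem EqTCAux.hlp_lift {G X : Type*} [Group G] [TopologicalSpace G] [TopologicalSpace X]
    [MulAction G X] {r : ℕ}
    (hHLP : ∀ (Y : Type uw) [TopologicalSpace Y] [TopologicalSpace.MetrizableSpace Y]
      [TopologicalSpace.SeparableSpace Y] [MulAction G Y] [ContinuousSMul G Y]
      (f : C(Y, Fin r → X)), (∀ (g : G) (y : Y), f (g • y) = g • f y) →
      ∀ F : C(Y × I, Quotient (MulAction.orbitRel G (Fin r → X))),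
        (∀ y, F (y, 0) = Quotient.mk _ (f y)) →
        ∃ H : C(Y × I, Fin r → X), (∀ y, H (y, 0) = f y) ∧
          (∀ (g : G) (y : Y) (s : I), H (g • y, s) = g • H (y, s)) ∧
          ∀ z, Quotient.mk (MulAction.orbitRel G (Fin r → X)) (H z) = F z)
    (Z : Type uv) [TopologicalSpace Z] [TopologicalSpace.MetrizableSpace Z]
    [SecondCountableTopology Z] [MulAction G Z] [ContinuousSMul G Z]
    (f : C(Z, Fin r → X)) (hf : ∀ (g : G) (y : Z), f (g • y) = g • f y)
    (F : C(Z × I, Quotient (MulAction.orbitRel G (Fin r → X))))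
    (hF : ∀ y, F (y, 0) = Quotient.mk _ (f y)) :
    ∃ H : C(Z × I, Fin r → X), (∀ y, H (y, 0) = f y) ∧
      (∀ (g : G) (y : Z) (s : I), H (g • y, s) = g • H (y, s)) ∧
      ∀ z, Quotient.mk (MulAction.orbitRel G (Fin r → X)) (H z) = F z := by
  classical
  haveI : T3Space Z := by
    letI : MetricSpace Z := TopologicalSpace.metrizableSpaceMetric Z
    infer_instance
  obtain ⟨e, he⟩ := TopologicalSpace.exists_embedding_l_infty Z
  let Y : Type uw := ULift.{uw} (Set.range e)
  let φ : Z ≃ₜ Y := he.toHomeomorph.trans Homeomorph.ulift.symm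
  haveI : SecondCountableTopology Y := φ.symm.secondCountableTopology
  haveI : TopologicalSpace.MetrizableSpace Y := φ.symm.isEmbedding.metrizableSpace
  haveI : TopologicalSpace.SeparableSpace Y := inferInstance
  letI : MulAction G Y :=
    { smul := fun g y => φ (g • φ.symm y)
      one_smul := fun y => by
        show φ ((1 : G) • φ.symm y) = y
        rw [one_smul]; exact φ.apply_symm_apply y
      mul_smul := fun a b y => by
        show φ ((a * b) • φ.symm y) = φ (a • φ.symm (φ (b • φ.symm y)))
        rw [φ.symm_apply_apply, mul_smul] }
  haveI : ContinuousSMul G Y :=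
    ⟨φ.continuous.comp (continuous_smul.comp (continuous_fst.prodMk
      (φ.symm.continuous.comp continuous_snd)))⟩
  have hφeq : ∀ (g : G) (z : Z), φ (g • z) = g • φ z := by
    intro g z
    show φ (g • z) = φ (g • φ.symm (φ z))
    rw [φ.symm_apply_apply]
  let f' : C(Y, Fin r → X) := f.comp ⟨φ.symm, φ.symm.continuous⟩
  have hf' : ∀ (g : G) (y : Y), f' (g • y) = g • f' y := by
    intro g y
    show f (φ.symm (φ (g • φ.symm y))) = g • f (φ.symm y)
    rw [φ.symm_apply_apply]
    exact hf g (φ.symm y)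
  let F' : C(Y × I, Quotient (MulAction.orbitRel G (Fin r → X))) :=
    F.comp ⟨fun z => (φ.symm z.1, z.2),
      (φ.symm.continuous.comp continuous_fst).prodMk continuous_snd⟩
  have hF' : ∀ y, F' (y, 0) = Quotient.mk _ (f' y) := fun y => hF (φ.symm y)
  obtain ⟨H, h1, h2, h3⟩ := hHLP Y f' hf' F' hF'
  refine ⟨H.comp ⟨fun z => (φ z.1, z.2),
    (φ.continuous.comp continuous_fst).prodMk continuous_snd⟩, ?_, ?_, ?_⟩
  · intro z
    show H (φ z, 0) = f z
    rw [h1 (φ z)]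
    show f (φ.symm (φ z)) = f z
    rw [φ.symm_apply_apply]
  · intro g z s
    show H (φ (g • z), s) = g • H (φ z, s)
    rw [hφeq g z]
    exact h2 g (φ z) s
  · intro z
    show Quotient.mk _ (H (φ z.1, z.2)) = F z
    rw [h3 (φ z.1, z.2)]
    show F (φ.symm (φ z.1), z.2) = F z
    rw [φ.symm_apply_apply]


/-- The Lusternik–Schnirelmann category `cat(Y)`: the least `n` such that `Y` is covered by
`n+1` open sets, each of whose inclusion into `Y` is homotopic to a constant map. -/
noncomputable def lsCat (Y : Type*) [TopologicalSpace Y] : ℕ∞ :=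
  sInf {n : ℕ∞ | ∃ m : ℕ, n = m ∧ ∃ U : Fin (m + 1) → Set Y,
    (∀ i, IsOpen (U i)) ∧ (⋃ i, U i) = Set.univ ∧
    ∀ i, ∃ y₀ : Y, (⟨Subtype.val, continuous_subtype_val⟩ : C((U i : Set Y), Y)).Homotopic
      (ContinuousMap.const _ y₀)}

/-- The sequential equivariant topological complexity defined with respect to a space `K`
with marked points `k 0, …, k (r-1)`. -/
noncomputable def eqTCVia (G X : Type*) [Group G] [TopologicalSpace X] [MulAction G X]
    {r : ℕ} (K : Type*) [TopologicalSpace K] (k : Fin r → K) : ℕ∞ :=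
  sInf {n : ℕ∞ | ∃ m : ℕ, n = m ∧ ∃ U : Fin (m + 1) → Set (Fin r → X),
    (∀ i, IsOpen (U i)) ∧ (⋃ i, U i) = Set.univ ∧
    (∀ i (g : G), ∀ x ∈ U i, g • x ∈ U i) ∧
    ∀ i, ∃ s : C((U i : Set (Fin r → X)), C(K, X)),
      (∀ x : U i, ∀ j, s x (k j) = (x : Fin r → X) j) ∧
      ∀ (x y : U i) (g : G), (y : Fin r → X) = g • (x : Fin r → X) →
        ∀ κ : K, s y κ = g • s x κ}

/-- The sequential equivariant topological complexity `TC_{r,G}(X)`, relative to the time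
points `0 = t 0 < t 1 < ⋯ < t (r-1) = 1` in `[0,1]`. -/
noncomputable def eqTC (G X : Type*) [Group G] [TopologicalSpace X] [MulAction G X]
    {r : ℕ} (t : Fin r → unitInterval) : ℕ∞ :=
  eqTCVia G X unitInterval t

/-- Let `G` be a topological group acting continuously and freely on a
path-connected separable metric space `X` and assume that the quotient map
`q_r : X^r → X^r/G` of the diagonal action has the `G`-equivariant homotopy lifting
property for separable metric `G`-spaces. Then `TC_{r,G}(X) ≤ cat(X^r/G)`. -/
theorem eqTC_le_lsCat_orbit {G X : Type*} [Group G] [TopologicalSpace G] [IsTopologicalGroup G]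
    [TopologicalSpace X] [PathConnectedSpace X] [TopologicalSpace.MetrizableSpace X]
    [TopologicalSpace.SeparableSpace X] [MulAction G X] [ContinuousSMul G X]
    (hfree : ∀ (g : G) (x : X), g • x = x → g = 1)
    {r : ℕ} (hr : 2 ≤ r) (t : Fin r → unitInterval) (htm : StrictMono t)
    (ht0 : t ⟨0, by omega⟩ = 0) (ht1 : t ⟨r - 1, by omega⟩ = 1)
    (hHLP : ∀ (Y : Type*) [TopologicalSpace Y] [TopologicalSpace.MetrizableSpace Y]
      [TopologicalSpace.SeparableSpace Y] [MulAction G Y] [ContinuousSMul G Y]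
      (f : C(Y, Fin r → X)), (∀ (g : G) (y : Y), f (g • y) = g • f y) →
      ∀ F : C(Y × I, Quotient (MulAction.orbitRel G (Fin r → X))),
        (∀ y, F (y, 0) = Quotient.mk _ (f y)) →
        ∃ H : C(Y × I, Fin r → X), (∀ y, H (y, 0) = f y) ∧
          (∀ (g : G) (y : Y) (s : I), H (g • y, s) = g • H (y, s)) ∧
          ∀ z, Quotient.mk (MulAction.orbitRel G (Fin r → X)) (H z) = F z) :
    eqTC G X t ≤ lsCat (Quotient (MulAction.orbitRel G (Fin r → X))) := by
  classical
  simp only [eqTC, eqTCVia, lsCat]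
  apply sInf_le_sInf
  rintro n ⟨m, rfl, U, hUopen, hUcover, hUcat⟩
  have hq : Continuous (Quotient.mk (MulAction.orbitRel G (Fin r → X))) :=
    continuous_quotient_mk'
  refine ⟨m, rfl, fun i => Quotient.mk _ ⁻¹' U i, fun i => (hUopen i).preimage hq, ?_, ?_, ?_⟩
  · rw [← Set.preimage_iUnion, hUcover, Set.preimage_univ]
  · intro i g x hx
    have hmk : Quotient.mk (MulAction.orbitRel G (Fin r → X)) (g • x) = Quotient.mk _ x :=
      Quotient.sound (MulAction.mem_orbit x g)
    simpa only [Set.mem_preimage, hmk] using hx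
  · intro i
    -- abbreviation for the quotient map
    set q : (Fin r → X) → Quotient (MulAction.orbitRel G (Fin r → X)) := Quotient.mk _ with hqdef
    set W : Set (Fin r → X) := q ⁻¹' U i with hWdef
    -- invariance of W
    have hWinv : ∀ (g : G) (x : Fin r → X), x ∈ W → g • x ∈ W := by
      intro g x hx
      have hmk : q (g • x) = q x := Quotient.sound (MulAction.mem_orbit x g)
      simpa only [hWdef, Set.mem_preimage, hmk] using hx
    -- instances on ↥W
    haveI hSCX : SecondCountableTopology X := by
      letI := TopologicalSpace.pseudoMetrizableSpacePseudoMetric X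
      exact UniformSpace.secondCountable_of_separable X
    haveI : TopologicalSpace.SeparableSpace ↥W := by infer_instance
    letI : MulAction G ↥W :=
      { smul := fun g y => ⟨g • (y : Fin r → X), hWinv g y y.2⟩
        one_smul := fun y => Subtype.ext (one_smul G (y : Fin r → X))
        mul_smul := fun g h y => Subtype.ext (mul_smul g h (y : Fin r → X)) }
    haveI : ContinuousSMul G ↥W :=
      ⟨(continuous_smul.comp (continuous_fst.prodMk
        (continuous_subtype_val.comp continuous_snd))).subtype_mk _⟩
    -- the nullhomotopy of the inclusion of U i
    obtain ⟨y₀, hhom⟩ := hUcat i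
    obtain ⟨h⟩ := hhom
    obtain ⟨x₀⟩ : Nonempty X := PathConnectedSpace.nonempty
    set D : Fin r → X := fun _ => x₀ with hD
    obtain ⟨w, rfl⟩ := Quotient.exists_rep y₀
    set pD : Path w D := Path.pi (fun j => (PathConnectedSpace.joined (w j) x₀).somePath)
    set pQ : Path (q w) (q D) := pD.map hq with hpQ
    set hp : ContinuousMap.Homotopy (ContinuousMap.const (↥(U i)) (q w))
        (ContinuousMap.const _ (q D)) :=
      { toFun := fun z => pQ z.1
        continuous_toFun := pQ.continuous.comp continuous_fst
        map_zero_left := fun _ => pQ.source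
        map_one_left := fun _ => pQ.target } with hhp
    set F0 := h.trans hp with hF0def
    -- homotopy lifting
    set f : C(↥W, Fin r → X) := ⟨Subtype.val, continuous_subtype_val⟩ with hfdef
    have hf : ∀ (g : G) (y : ↥W), f (g • y) = g • f y := fun g y => rfl
    set F : C(↥W × I, Quotient (MulAction.orbitRel G (Fin r → X))) :=
      ⟨fun z => F0 (z.2, ⟨q z.1.1, z.1.2⟩),
       F0.continuous.comp (continuous_snd.prodMk
         ((hq.comp (continuous_subtype_val.comp continuous_fst)).subtype_mk _))⟩ with hFdef
    have hF0app : ∀ y : ↥W, F (y, 0) = Quotient.mk _ (f y) := by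
      intro y
      show F0 (0, _) = _
      rw [F0.apply_zero]
      rfl
    obtain ⟨H, hH0, hHeq, hHq⟩ := EqTCAux.hlp_lift hHLP ↥W f hf F hF0app
    have hF1app : ∀ y : ↥W, F (y, 1) = q D := by
      intro y
      show F0 (1, _) = _
      rw [F0.apply_one]
      rfl
    have hcoord : ∀ (y : ↥W) (a b : Fin r), H (y, 1) a = H (y, 1) b := by
      intro y a b
      have h1 : q (H (y, 1)) = q D := (hHq (y, 1)).trans (hF1app y)
      obtain ⟨g, hg⟩ := MulAction.mem_orbit_iff.mp
        (MulAction.orbitRel_apply.mp (Quotient.exact h1))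
      rw [← hg]
      rfl
    -- the time parameters, extended to a strictly monotone function on ℕ
    set T : ℕ → ℝ := fun n => if h : n < r then ((t ⟨n, h⟩ : I) : ℝ)
      else ((t ⟨r - 1, by omega⟩ : I) : ℝ) + (n + 1 - r : ℕ) with hTdef
    have hT : StrictMono T := by
      intro a b hab
      simp only [hTdef]
      rcases lt_or_ge b r with hb | hb
      · rw [dif_pos (lt_trans hab hb), dif_pos hb]
        exact_mod_cast htm (show (⟨a, lt_trans hab hb⟩ : Fin r) < ⟨b, hb⟩ from hab)
      · rcases lt_or_ge a r with ha | ha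
        · rw [dif_pos ha, dif_neg (not_lt.mpr hb)]
          have h1 : (t ⟨a, ha⟩ : ℝ) ≤ (t ⟨r - 1, by omega⟩ : ℝ) := by
            exact_mod_cast htm.monotone (show (⟨a, ha⟩ : Fin r) ≤ (⟨r - 1, by omega⟩ : Fin r) from
              by rw [Fin.mk_le_mk]; omega)
          have h2 : (1 : ℝ) ≤ (b + 1 - r : ℕ) := by
            have : 1 ≤ b + 1 - r := by omega
            exact_mod_cast this
          linarith
        · rw [dif_neg (not_lt.mpr ha), dif_neg (not_lt.mpr hb)]
          have : (a + 1 - r : ℕ) < ((b + 1 - r : ℕ) : ℝ) := by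
            exact_mod_cast show a + 1 - r < b + 1 - r by omega
          linarith
    have hTt : ∀ j : Fin r, T j.1 = ((t j : I) : ℝ) := by
      intro j
      simp only [hTdef, dif_pos j.2, Fin.eta]
    -- the clamped tent function and the index function
    set tentI : ℝ → I := fun κ => Set.projIcc (0 : ℝ) 1 zero_le_one (EqTCAux.tent T r κ)
      with htentIdef
    have htentIc : Continuous tentI := continuous_projIcc.comp EqTCAux.tent_continuous
    set nFin : ℝ → Fin r := fun κ => ⟨EqTCAux.nn T r κ,
      lt_of_le_of_lt (EqTCAux.nn_le κ) (by omega)⟩ with hnFindef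
    -- the section candidate
    set φ : ↥W × I → X := fun z => H (z.1, tentI (z.2 : ℝ)) (nFin (z.2 : ℝ)) with hφdef
    have hcont : ∀ c : Fin r, Continuous fun z : ↥W × I => H (z.1, tentI ((z.2 : ℝ))) c :=
      fun c => (continuous_apply c).comp (H.continuous.comp (continuous_fst.prodMk
        (htentIc.comp (continuous_subtype_val.comp continuous_snd))))
    have hφc : Continuous φ := by
      rw [continuous_iff_continuousAt]
      rintro ⟨y, κ⟩
      by_cases hκ : ∃ j, j < r - 1 ∧ (κ : ℝ) = EqTCAux.mid T j
      · obtain ⟨j, hj, hjm⟩ := hκ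
        have htent1 : tentI (κ : ℝ) = 1 := by
          apply Subtype.ext
          show max 0 (min 1 (EqTCAux.tent T r (κ : ℝ))) = 1
          rw [hjm, EqTCAux.tent_mid hT hj]
          norm_num
        have key : ∀ c : Fin r, H (y, tentI (κ : ℝ)) c = φ (y, κ) := by
          intro c
          show H (y, tentI (κ : ℝ)) c = H (y, tentI (κ : ℝ)) (nFin (κ : ℝ))
          rw [htent1]
          exact hcoord y c _
        have tendAB : ∀ c : Fin r, Filter.Tendsto (fun z : ↥W × I => H (z.1, tentI ((z.2 : ℝ))) c)
            (nhds (y, κ)) (nhds (φ (y, κ))) := by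
          intro c
          have h1 := (hcont c).tendsto (y, κ)
          rwa [key c] at h1
        -- eventually the index is j or j + 1
        obtain ⟨ε, hε, hεle⟩ : ∃ ε > 0, ∀ i ∈ (Finset.range (r - 1)).erase j,
            ε ≤ |EqTCAux.mid T i - EqTCAux.mid T j| := by
          rcases Finset.eq_empty_or_nonempty ((Finset.range (r - 1)).erase j) with hemp | hne
          · exact ⟨1, one_pos, by simp [hemp]⟩
          · refine ⟨Finset.inf' _ hne (fun i => |EqTCAux.mid T i - EqTCAux.mid T j|), ?_,
              fun i hi => Finset.inf'_le _ hi⟩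
            rw [gt_iff_lt, Finset.lt_inf'_iff]
            intro i hi
            have hij : i ≠ j := Finset.ne_of_mem_erase hi
            exact abs_pos.mpr (sub_ne_zero.mpr
              (fun hc => hij ((EqTCAux.mid_strictMono hT).injective hc)))
        have hopen : IsOpen {z : ↥W × I | |((z.2 : ℝ)) - (κ : ℝ)| < ε} :=
          isOpen_lt (((continuous_subtype_val.comp continuous_snd).sub continuous_const).abs)
            continuous_const
        have hmem : (y, κ) ∈ {z : ↥W × I | |((z.2 : ℝ)) - (κ : ℝ)| < ε} := by
          simp [hε]
        have hev : ∀ᶠ z : ↥W × I in nhds (y, κ),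
            φ z = (fun z : ↥W × I => H (z.1, tentI ((z.2 : ℝ))) ⟨j, by omega⟩) z ∨
            φ z = (fun z : ↥W × I => H (z.1, tentI ((z.2 : ℝ))) ⟨j + 1, by omega⟩) z := by
          filter_upwards [hopen.mem_nhds hmem] with z hz
          have habs := abs_lt.mp hz
          have hnn : EqTCAux.nn T r ((z.2 : ℝ)) = j ∨ EqTCAux.nn T r ((z.2 : ℝ)) = j + 1 := by
            apply EqTCAux.nn_pair hj
            · intro i hi
              have hi' : i ∈ (Finset.range (r - 1)).erase j :=
                Finset.mem_erase.mpr ⟨by omega, Finset.mem_range.mpr (by omega)⟩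
              have h1 := hεle i hi'
              have h2 : EqTCAux.mid T i < EqTCAux.mid T j := EqTCAux.mid_strictMono hT hi
              rw [abs_of_neg (by linarith)] at h1
              rw [hjm] at habs
              linarith
            · intro i hji hir
              have hi' : i ∈ (Finset.range (r - 1)).erase j :=
                Finset.mem_erase.mpr ⟨by omega, Finset.mem_range.mpr hir⟩
              have h1 := hεle i hi'
              have h2 : EqTCAux.mid T j < EqTCAux.mid T i := EqTCAux.mid_strictMono hT hji
              rw [abs_of_pos (by linarith)] at h1
              rw [hjm] at habs
              linarith
          rcases hnn with hn | hn
          · left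
            show H (z.1, tentI ((z.2 : ℝ))) (nFin ((z.2 : ℝ))) = _
            have : nFin ((z.2 : ℝ)) = ⟨j, by omega⟩ := by
              simp only [hnFindef]
              exact Fin.ext hn
            rw [this]
          · right
            show H (z.1, tentI ((z.2 : ℝ))) (nFin ((z.2 : ℝ))) = _
            have : nFin ((z.2 : ℝ)) = ⟨j + 1, by omega⟩ := by
              simp only [hnFindef]
              exact Fin.ext hn
            rw [this]
        rw [ContinuousAt, Filter.tendsto_def]
        intro V hV
        have h1 := (tendAB ⟨j, by omega⟩).eventually (p := fun v => v ∈ V) hV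
        have h2 := (tendAB ⟨j + 1, by omega⟩).eventually (p := fun v => v ∈ V) hV
        rw [Filter.eventually_iff] at h1 h2
        have := Filter.inter_mem (Filter.inter_mem h1 h2) (Filter.eventually_iff.mp hev)
        apply Filter.mem_of_superset this
        rintro z ⟨⟨hz1, hz2⟩, hz3⟩
        rcases hz3 with hh | hh
        · show φ z ∈ V; rw [hh]; exact hz1
        · show φ z ∈ V; rw [hh]; exact hz2
      · -- κ is not a midpoint: the index is locally constant
        push_neg at hκ
        have hne : (Finset.range (r - 1)).Nonempty := ⟨0, Finset.mem_range.mpr (by omega)⟩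
        set ε := Finset.inf' _ hne (fun i => |EqTCAux.mid T i - (κ : ℝ)|) with hεdef
        have hε : 0 < ε := by
          rw [hεdef, Finset.lt_inf'_iff]
          intro i hi
          exact abs_pos.mpr (sub_ne_zero.mpr
            (fun hc => hκ i (Finset.mem_range.mp hi) hc.symm))
        have hloc : ∀ κ' : ℝ, |κ' - (κ : ℝ)| < ε →
            EqTCAux.nn T r κ' = EqTCAux.nn T r (κ : ℝ) := by
          intro κ' hκ'
          unfold EqTCAux.nn
          congr 1
          apply Finset.filter_congr
          intro i hi
          have hile : ε ≤ |EqTCAux.mid T i - (κ : ℝ)| :=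
            Finset.inf'_le (fun i => |EqTCAux.mid T i - (κ : ℝ)|) hi
          have habs := abs_lt.mp hκ'
          rcases le_or_gt (EqTCAux.mid T i) (κ : ℝ) with hle | hgt
          · have hlt : EqTCAux.mid T i < (κ : ℝ) :=
              lt_of_le_of_ne hle (fun hc => hκ i (Finset.mem_range.mp hi) hc.symm)
            rw [abs_of_neg (by linarith)] at hile
            exact iff_of_true (by linarith) hle
          · rw [abs_of_pos (by linarith)] at hile
            exact iff_of_false (by linarith) (not_le.mpr hgt)
        have hopen : IsOpen {z : ↥W × I | |((z.2 : ℝ)) - (κ : ℝ)| < ε} :=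
          isOpen_lt (((continuous_subtype_val.comp continuous_snd).sub continuous_const).abs)
            continuous_const
        have hmem : (y, κ) ∈ {z : ↥W × I | |((z.2 : ℝ)) - (κ : ℝ)| < ε} := by
          simp [hε]
        apply ContinuousAt.congr ((hcont (nFin (κ : ℝ))).continuousAt)
        rw [Filter.eventuallyEq_iff_exists_mem]
        refine ⟨_, hopen.mem_nhds hmem, ?_⟩
        intro z hz
        show H (z.1, tentI ((z.2 : ℝ))) (nFin (κ : ℝ)) = H (z.1, tentI ((z.2 : ℝ))) (nFin ((z.2 : ℝ)))
        have : nFin ((z.2 : ℝ)) = nFin ((κ : ℝ)) := by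
          simp only [hnFindef]
          exact Fin.ext (hloc _ hz)
        rw [this]
    refine ⟨(ContinuousMap.mk φ hφc).curry, ?_, ?_⟩
    · intro x j
      show φ (x, t j) = (x : Fin r → X) j
      have h0 : tentI ((t j : I) : ℝ) = 0 := by
        apply Subtype.ext
        show max 0 (min 1 (EqTCAux.tent T r ((t j : I) : ℝ))) = 0
        rw [EqTCAux.tent_T hT ((t j : I) : ℝ) (hTt j).symm]
        norm_num
      have hn : nFin ((t j : I) : ℝ) = j := by
        simp only [hnFindef]
        apply Fin.ext
        show EqTCAux.nn T r _ = j.1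
        rw [← hTt j]
        exact EqTCAux.nn_T hT (by have := j.isLt; omega)
      show H (x, tentI ((t j : I) : ℝ)) (nFin ((t j : I) : ℝ)) = _
      rw [h0, hn, hH0 x]
      rfl
    · intro x y g hxy κ
      show φ (y, κ) = g • φ (x, κ)
      have hy : y = g • x := Subtype.ext hxy
      rw [hy]
      show H (g • x, tentI (κ : ℝ)) (nFin (κ : ℝ)) = g • H (x, tentI (κ : ℝ)) (nFin (κ : ℝ))
      rw [hHeq g x (tentI (κ : ℝ))]
      rfl
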